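/- For b ≠ −1, the only polynomial invariants of the coadjoint representation of g_{4.8}^b are constants: if F is a polynomial in x_1,…,x_4 with c_{ij}^k x_k ∂F/∂x_j = 0 for all i, then F is constant. -/

import Mathlib

def c48 (b : ℝ) (i j k : Fin 4) : ℝ :=
  if i = 1 ∧ j = 2 ∧ k = 0 then 1 else
  if i = 2 ∧ j = 1 ∧ k = 0 then -1 else
  if i = 0 ∧ j = 3 ∧ k = 0 then 1 + b else
  if i = 3 ∧ j = 0 ∧ k = 0 then -(1 + b) else
  if i = 1 ∧ j = 3 ∧ k = 1 then 1 else
  if i = 3 ∧ j = 1 ∧ k = 1 then -1 else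
  if i = 2 ∧ j = 3 ∧ k = 2 then b else
  if i = 3 ∧ j = 2 ∧ k = 2 then -b else 0

/-- The bilinear bracket on `ℝ⁴` determined by the structure constants `c48 b`. -/
def br48 (b : ℝ) (x y : Fin 4 → ℝ) : Fin 4 → ℝ :=
  fun k => ∑ i, ∑ j, x i * y j * c48 b i j k

open MvPolynomial in
/-- The infinitesimal generator `X_i = c_{ij}^k x_k ∂_{x_j}` of the coadjoint action,
acting on polynomial functions on the dual space. -/
noncomputable def Xop48 (b : ℝ) (i : Fin 4) (P : MvPolynomial (Fin 4) ℝ) :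
    MvPolynomial (Fin 4) ℝ :=
  ∑ j, (∑ k, C (c48 b i j k) * X k) * pderiv j P

open MvPolynomial in
lemma coeff_pderiv48 (i : Fin 4) (t : Fin 4 →₀ ℕ) (P : MvPolynomial (Fin 4) ℝ) :
    coeff t (pderiv i P) = (t i + 1 : ℕ) * coeff (t + Finsupp.single i 1) P := by
  induction P using MvPolynomial.induction_on' with
  | monomial s a =>
    rw [pderiv_monomial, coeff_monomial, coeff_monomial]
    by_cases h2 : s = t + Finsupp.single i 1
    · subst h2
      rw [if_pos (add_tsub_cancel_right _ _), if_pos rfl]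
      simp [Finsupp.single_apply]
      ring
    · rw [if_neg h2, mul_zero]
      by_cases h3 : s - Finsupp.single i 1 = t
      · rw [if_pos h3]
        have hsi : s i = 0 := by
          by_contra hs
          apply h2
          ext j
          have := DFunLike.congr_fun h3 j
          simp only [Finsupp.tsub_apply, Finsupp.coe_add, Pi.add_apply,
            Finsupp.single_apply] at this ⊢
          rcases eq_or_ne i j with rfl | hij
          · simp at this ⊢; omega
          · simp [hij] at this ⊢; omega
        simp [hsi]
      · rw [if_neg h3]
  | add p q hp hq => simp [hp, hq, mul_add]

open MvPolynomial in
lemma const_of_pderiv48 (P : MvPolynomial (Fin 4) ℝ) (h : ∀ i, pderiv i P = 0) :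
    ∃ r : ℝ, P = C r := by
  refine ⟨coeff 0 P, ?_⟩
  ext m
  rcases eq_or_ne m 0 with rfl | hm
  · simp
  · obtain ⟨i, hi⟩ : ∃ i, m i ≠ 0 := by
      by_contra hc; push_neg at hc; exact hm (Finsupp.ext fun i => hc i)
    have hkey := coeff_pderiv48 i (m - Finsupp.single i 1) P
    rw [h i, coeff_zero] at hkey
    have hms : m - Finsupp.single i 1 + Finsupp.single i 1 = m := by
      ext j
      simp only [Finsupp.coe_add, Pi.add_apply, Finsupp.tsub_apply, Finsupp.single_apply]
      rcases eq_or_ne i j with rfl | hij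
      · simp; omega
      · simp [hij]
    rw [hms] at hkey
    have hcz : coeff m P = 0 := by
      rcases mul_eq_zero.1 hkey.symm with h' | h'
      · exact absurd h' (by positivity)
      · exact h'
    rw [hcz, coeff_C, if_neg (Ne.symm hm)]

open MvPolynomial in
/-- For `b ≠ -1`, the only polynomial invariants of the coadjoint representation of
`g_{4.8}^b` are the constants. -/
theorem g48_no_invariants (b : ℝ) (hb : b ≠ -1) :
    ∀ P : MvPolynomial (Fin 4) ℝ, (∀ i : Fin 4, Xop48 b i P = 0) → ∃ r : ℝ, P = C r := by
  intro P h
  have hb' : (1 : ℝ) + b ≠ 0 := fun h' => hb (by linarith)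
  have hC : (C ((1:ℝ) + b) : MvPolynomial (Fin 4) ℝ) ≠ 0 :=
    fun h' => hb' (MvPolynomial.C_injective _ _ (by simpa using h'))
  have hX : ∀ k : Fin 4, (X k : MvPolynomial (Fin 4) ℝ) ≠ 0 := fun k => X_ne_zero k
  have e0 : C ((1:ℝ)+b) * X 0 * pderiv 3 P = 0 := by
    have := h 0; simpa [Xop48, c48, Fin.sum_univ_four] using this
  have hd3 : pderiv (3 : Fin 4) P = 0 := by
    rcases mul_eq_zero.1 e0 with h' | h'
    · rcases mul_eq_zero.1 h' with h'' | h''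
      · exact absurd h'' hC
      · exact absurd h'' (hX 0)
    · exact h'
  have e1 : X 0 * pderiv 2 P + X 1 * pderiv 3 P = 0 := by
    have := h 1; simpa [Xop48, c48, Fin.sum_univ_four] using this
  rw [hd3, mul_zero, add_zero] at e1
  have hd2 : pderiv (2 : Fin 4) P = 0 := by
    rcases mul_eq_zero.1 e1 with h' | h'
    · exact absurd h' (hX 0)
    · exact h'
  have e2 : -(X 0 * pderiv 1 P) + C b * X 2 * pderiv 3 P = 0 := by
    have := h 2; simpa [Xop48, c48, Fin.sum_univ_four] using this
  rw [hd3, mul_zero, add_zero, neg_eq_zero] at e2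
  have hd1 : pderiv (1 : Fin 4) P = 0 := by
    rcases mul_eq_zero.1 e2 with h' | h'
    · exact absurd h' (hX 0)
    · exact h'
  have e3 : (-C b + -1) * X 0 * pderiv 0 P + -(X 1 * pderiv 1 P)
      + -(C b * X 2 * pderiv 2 P) = 0 := by
    have := h 3; simpa [Xop48, c48, Fin.sum_univ_four] using this
  rw [hd1, hd2] at e3
  simp only [mul_zero, neg_zero, add_zero] at e3
  have hC' : ((-C b + -1 : MvPolynomial (Fin 4) ℝ)) ≠ 0 := by
    intro hcc
    apply hC
    rw [map_add, map_one]
    linear_combination -hcc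
  have hd0 : pderiv (0 : Fin 4) P = 0 := by
    rcases mul_eq_zero.1 e3 with h' | h'
    · rcases mul_eq_zero.1 h' with h'' | h''
      · exact absurd h'' hC'
      · exact absurd h'' (hX 0)
    · exact h'
  exact const_of_pderiv48 P (fun i => by fin_cases i <;> assumption)
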